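/- Let n ≥ 3 and let α be a partial permutation of {1, ..., n} that is a partial isometry of the cycle graph C_n, i.e., d(xα, yα) = d(x, y) for all x, y in the domain of α, where d(x, y) = min{|x - y|, n - |x - y|}. Then α is oriented. -/

import Mathlib

/-- A sequence `a : Fin t → Fin n` is cyclic if at most one index `i`
satisfies `a i > a (i+1)` (indices mod `t`). -/
def IsCyclicSeq {n t : ℕ} (a : Fin t → Fin n) : Prop :=
  (Finset.univ.filter fun i : Fin t =>
    a ⟨(i.val + 1) % t, Nat.mod_lt _ i.pos⟩ < a i).card ≤ 1

/-- A sequence is anti-cyclic if at most one index `i`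
satisfies `a i < a (i+1)` (indices mod `t`). -/
def IsAntiCyclicSeq {n t : ℕ} (a : Fin t → Fin n) : Prop :=
  (Finset.univ.filter fun i : Fin t =>
    a i < a ⟨(i.val + 1) % t, Nat.mod_lt _ i.pos⟩).card ≤ 1

/-- A sequence is oriented if it is cyclic or anti-cyclic. -/
def IsOrientedSeq {n t : ℕ} (a : Fin t → Fin n) : Prop :=
  IsCyclicSeq a ∨ IsAntiCyclicSeq a

/-- The geodesic distance on the cycle graph C_n. -/
def cycleDist (n : ℕ) (x y : Fin n) : ℕ :=
  min (Nat.dist x.val y.val) (n - Nat.dist x.val y.val)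

/- ---------- auxiliary lemmas ---------- -/

lemma mod_two_n {n m : ℕ} (hn : 0 < n) (h : m < 2 * n) :
    (m % n = m ∧ m < n) ∨ (m % n = m - n ∧ n ≤ m ∧ m - n < n) := by
  rcases Nat.lt_or_ge m n with h1 | h1
  · exact Or.inl ⟨Nat.mod_eq_of_lt h1, h1⟩
  · right
    refine ⟨?_, h1, by omega⟩
    rw [Nat.mod_eq_sub_mod h1, Nat.mod_eq_of_lt (by omega)]

lemma neg_val_eq {n : ℕ} [NeZero n] (p : Fin n) :
    (-p).val = if p.val = 0 then 0 else n - p.val := by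
  have hn : 0 < n := Nat.pos_of_ne_zero (NeZero.ne n)
  have : (-p).val = (n - p.val) % n := rfl
  rw [this]
  rcases Nat.eq_zero_or_pos p.val with h0 | h0
  · simp [h0]
  · rw [if_neg (by omega), Nat.mod_eq_of_lt (by omega)]

lemma Dlem {n : ℕ} [NeZero n] {p q : Fin n}
    (h : min p.val (-p).val = min q.val (-q).val) : p = q ∨ p = -q := by
  have hn : 0 < n := Nat.pos_of_ne_zero (NeZero.ne n)
  have hp := p.isLt
  have hq := q.isLt
  have ep := neg_val_eq p
  have eq' := neg_val_eq q
  have key : p.val = q.val ∨ p.val = (-q).val := by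
    rw [ep, eq'] at h
    rw [eq']
    split_ifs at h ⊢ <;> omega
  rcases key with g | g
  · exact Or.inl (Fin.ext g)
  · exact Or.inr (Fin.ext g)

lemma cycleDist_eq' {n : ℕ} [NeZero n] (x y : Fin n) :
    cycleDist n x y = min (y - x).val (-(y - x)).val := by
  have hn : 0 < n := Nat.pos_of_ne_zero (NeZero.ne n)
  have hx := x.isLt
  have hy := y.isLt
  have h1 : (y - x).val = (n - x.val + y.val) % n := by rw [Fin.sub_def]
  have h2 : (-(y - x)).val = (n - (y - x).val) % n := rfl
  have e1 := mod_two_n hn (show n - x.val + y.val < 2 * n by omega)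
  rw [h1] at h2 ⊢
  have hv : (n - x.val + y.val) % n < n := Nat.mod_lt _ hn
  have e2 := mod_two_n hn (show n - (n - x.val + y.val) % n < 2 * n by omega)
  rw [h2]
  unfold cycleDist Nat.dist
  omega

lemma cycleDist_eq_zero {n : ℕ} {x y : Fin n} (h : cycleDist n x y = 0) : x = y := by
  have hx := x.isLt
  have hy := y.isLt
  unfold cycleDist Nat.dist at h
  exact Fin.ext (by omega)

lemma antipode_unique {n : ℕ} (x z w : Fin n) (h1 : 2 * cycleDist n x z = n)
    (h2 : 2 * cycleDist n x w = n) : z = w := by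
  have hx := x.isLt
  have hz := z.isLt
  have hw := w.isLt
  unfold cycleDist Nat.dist at h1 h2
  exact Fin.ext (by omega)

lemma cycleDist_add {n : ℕ} [NeZero n] (x y c : Fin n) :
    cycleDist n (x + c) (y + c) = cycleDist n x y := by
  rw [cycleDist_eq', cycleDist_eq']
  have h : y + c - (x + c) = y - x := by open Fin.CommRing in ring
  rw [h]

lemma cycleDist_sub {n : ℕ} [NeZero n] (x y c : Fin n) :
    cycleDist n (c - x) (c - y) = cycleDist n x y := by
  rw [cycleDist_eq', cycleDist_eq']
  have h : c - y - (c - x) = -(y - x) := by open Fin.CommRing in ring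
  rw [h, neg_neg, min_comm]

lemma rigid {n : ℕ} [NeZero n] (x y z w : Fin n) (h0 : cycleDist n x y ≠ 0)
    (h2 : 2 * cycleDist n x y ≠ n)
    (hz : cycleDist n x z = cycleDist n x w)
    (hy : cycleDist n y z = cycleDist n y w) : z = w := by
  have hn : 0 < n := Nat.pos_of_ne_zero (NeZero.ne n)
  rw [cycleDist_eq'] at hz hy
  rw [cycleDist_eq' x w] at hz
  rw [cycleDist_eq' y w] at hy
  rcases Dlem hz with k1 | k1
  · exact sub_left_injective k1
  rcases Dlem hy with k2 | k2
  · exact sub_left_injective k2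
  -- both reflections: derive 2*(y-x) = 0
  exfalso
  have haa : (y - x) + (y - x) = 0 := by open Fin.CommRing in linear_combination k1 - k2
  set a : Fin n := y - x with ha
  have hva : (a.val + a.val) % n = 0 := by rw [← Fin.val_add, haa, Fin.val_zero]
  have hia := a.isLt
  have e1 := mod_two_n hn (show a.val + a.val < 2 * n by omega)
  have hcd : cycleDist n x y = min a.val (-a).val := cycleDist_eq' x y
  have e2 := neg_val_eq a
  rw [hcd] at h0 h2
  rw [e2] at h0 h2
  split_ifs at h0 h2 <;> omega

lemma rot_cyclic {n t : ℕ} [NeZero n] (e : Fin t → Fin n) (he : StrictMono e) (c : Fin n) :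
    IsCyclicSeq (fun i => e i + c) := by
  have hn : 0 < n := Nat.pos_of_ne_zero (NeZero.ne n)
  rw [IsCyclicSeq, Finset.card_le_one]
  intro a ha b hb
  simp only [Finset.mem_filter, Finset.mem_univ, true_and] at ha hb
  suffices H : ∀ a b : Fin t,
      (e ⟨(a.val + 1) % t, Nat.mod_lt _ a.pos⟩ + c < e a + c) →
      (e ⟨(b.val + 1) % t, Nat.mod_lt _ b.pos⟩ + c < e b + c) →
      a.val ≤ b.val → a = b by
    rcases le_total a.val b.val with h | h
    · exact H a b ha hb h
    · exact (H b a hb ha h).symm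
  clear ha hb a b
  intro a b ha hb hab
  have ht : 0 < t := a.pos
  have hC : c.val < n := c.isLt
  rcases Nat.lt_or_ge (b.val + 1) t with hbt | hbt
  · have hat : a.val + 1 < t := by omega
    have ia : (⟨(a.val + 1) % t, Nat.mod_lt _ a.pos⟩ : Fin t) = ⟨a.val + 1, hat⟩ :=
      Fin.ext (Nat.mod_eq_of_lt hat)
    have ib : (⟨(b.val + 1) % t, Nat.mod_lt _ b.pos⟩ : Fin t) = ⟨b.val + 1, hbt⟩ :=
      Fin.ext (Nat.mod_eq_of_lt hbt)
    rw [ia, Fin.lt_def, Fin.val_add, Fin.val_add] at ha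
    rw [ib, Fin.lt_def, Fin.val_add, Fin.val_add] at hb
    have hma : (e a).val < (e ⟨a.val + 1, hat⟩).val := he (by simp [Fin.lt_def])
    have hmb : (e b).val < (e ⟨b.val + 1, hbt⟩).val := he (by simp [Fin.lt_def])
    have b1 := (e a).isLt
    have b2 := (e ⟨a.val + 1, hat⟩).isLt
    have b3 := (e b).isLt
    have b4 := (e ⟨b.val + 1, hbt⟩).isLt
    have E1 := mod_two_n hn (show (e a).val + c.val < 2 * n by omega)
    have E2 := mod_two_n hn (show (e ⟨a.val + 1, hat⟩).val + c.val < 2 * n by omega)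
    have E3 := mod_two_n hn (show (e b).val + c.val < 2 * n by omega)
    have E4 := mod_two_n hn (show (e ⟨b.val + 1, hbt⟩).val + c.val < 2 * n by omega)
    apply Fin.ext
    by_contra hne
    have hlt : a.val < b.val := by omega
    have hmab : (e ⟨a.val + 1, hat⟩).val ≤ (e b).val :=
      he.monotone (show (⟨a.val + 1, hat⟩ : Fin t) ≤ b from by
        simp only [Fin.le_def]; omega)
    omega
  · have ib : (⟨(b.val + 1) % t, Nat.mod_lt _ b.pos⟩ : Fin t) = ⟨0, ht⟩ :=
      Fin.ext (by
        have : b.val + 1 = t := by have := b.isLt; omega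
        simp [this])
    rw [ib, Fin.lt_def, Fin.val_add, Fin.val_add] at hb
    rcases Nat.lt_or_ge (a.val + 1) t with hat | hat
    · exfalso
      have ia : (⟨(a.val + 1) % t, Nat.mod_lt _ a.pos⟩ : Fin t) = ⟨a.val + 1, hat⟩ :=
        Fin.ext (Nat.mod_eq_of_lt hat)
      rw [ia, Fin.lt_def, Fin.val_add, Fin.val_add] at ha
      have hma : (e a).val < (e ⟨a.val + 1, hat⟩).val := he (by simp [Fin.lt_def])
      have hm0 : (e ⟨0, ht⟩).val ≤ (e a).val :=
        he.monotone (show (⟨0, ht⟩ : Fin t) ≤ a from by simp [Fin.le_def])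
      have hm1 : (e ⟨a.val + 1, hat⟩).val ≤ (e b).val :=
        he.monotone (show (⟨a.val + 1, hat⟩ : Fin t) ≤ b from by
          simp only [Fin.le_def]; have := b.isLt; omega)
      have b1 := (e a).isLt
      have b2 := (e ⟨a.val + 1, hat⟩).isLt
      have b3 := (e b).isLt
      have b4 := (e ⟨0, ht⟩).isLt
      have E1 := mod_two_n hn (show (e a).val + c.val < 2 * n by omega)
      have E2 := mod_two_n hn (show (e ⟨a.val + 1, hat⟩).val + c.val < 2 * n by omega)
      have E3 := mod_two_n hn (show (e b).val + c.val < 2 * n by omega)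
      have E4 := mod_two_n hn (show (e ⟨0, ht⟩).val + c.val < 2 * n by omega)
      omega
    · apply Fin.ext
      have := a.isLt
      omega

lemma refl_anticyclic {n t : ℕ} [NeZero n] (e : Fin t → Fin n) (he : StrictMono e) (c : Fin n) :
    IsAntiCyclicSeq (fun i => c - e i) := by
  have hn : 0 < n := Nat.pos_of_ne_zero (NeZero.ne n)
  rw [IsAntiCyclicSeq, Finset.card_le_one]
  intro a ha b hb
  simp only [Finset.mem_filter, Finset.mem_univ, true_and] at ha hb
  suffices H : ∀ a b : Fin t,
      (c - e a < c - e ⟨(a.val + 1) % t, Nat.mod_lt _ a.pos⟩) →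
      (c - e b < c - e ⟨(b.val + 1) % t, Nat.mod_lt _ b.pos⟩) →
      a.val ≤ b.val → a = b by
    rcases le_total a.val b.val with h | h
    · exact H a b ha hb h
    · exact (H b a hb ha h).symm
  clear ha hb a b
  intro a b ha hb hab
  have ht : 0 < t := a.pos
  have hC : c.val < n := c.isLt
  have hsub : ∀ x : Fin n, (c - x).val = (n - x.val + c.val) % n := by
    intro x; rw [Fin.sub_def]
  rcases Nat.lt_or_ge (b.val + 1) t with hbt | hbt
  · have hat : a.val + 1 < t := by omega
    have ia : (⟨(a.val + 1) % t, Nat.mod_lt _ a.pos⟩ : Fin t) = ⟨a.val + 1, hat⟩ :=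
      Fin.ext (Nat.mod_eq_of_lt hat)
    have ib : (⟨(b.val + 1) % t, Nat.mod_lt _ b.pos⟩ : Fin t) = ⟨b.val + 1, hbt⟩ :=
      Fin.ext (Nat.mod_eq_of_lt hbt)
    rw [ia, Fin.lt_def, hsub, hsub] at ha
    rw [ib, Fin.lt_def, hsub, hsub] at hb
    have hma : (e a).val < (e ⟨a.val + 1, hat⟩).val := he (by simp [Fin.lt_def])
    have hmb : (e b).val < (e ⟨b.val + 1, hbt⟩).val := he (by simp [Fin.lt_def])
    have b1 := (e a).isLt
    have b2 := (e ⟨a.val + 1, hat⟩).isLt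
    have b3 := (e b).isLt
    have b4 := (e ⟨b.val + 1, hbt⟩).isLt
    have E1 := mod_two_n hn (show n - (e a).val + c.val < 2 * n by omega)
    have E2 := mod_two_n hn (show n - (e ⟨a.val + 1, hat⟩).val + c.val < 2 * n by omega)
    have E3 := mod_two_n hn (show n - (e b).val + c.val < 2 * n by omega)
    have E4 := mod_two_n hn (show n - (e ⟨b.val + 1, hbt⟩).val + c.val < 2 * n by omega)
    apply Fin.ext
    by_contra hne
    have hlt : a.val < b.val := by omega
    have hmab : (e ⟨a.val + 1, hat⟩).val ≤ (e b).val :=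
      he.monotone (show (⟨a.val + 1, hat⟩ : Fin t) ≤ b from by
        simp only [Fin.le_def]; omega)
    omega
  · have ib : (⟨(b.val + 1) % t, Nat.mod_lt _ b.pos⟩ : Fin t) = ⟨0, ht⟩ :=
      Fin.ext (by
        have : b.val + 1 = t := by have := b.isLt; omega
        simp [this])
    rw [ib, Fin.lt_def, hsub, hsub] at hb
    rcases Nat.lt_or_ge (a.val + 1) t with hat | hat
    · exfalso
      have ia : (⟨(a.val + 1) % t, Nat.mod_lt _ a.pos⟩ : Fin t) = ⟨a.val + 1, hat⟩ :=
        Fin.ext (Nat.mod_eq_of_lt hat)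
      rw [ia, Fin.lt_def, hsub, hsub] at ha
      have hma : (e a).val < (e ⟨a.val + 1, hat⟩).val := he (by simp [Fin.lt_def])
      have hm0 : (e ⟨0, ht⟩).val ≤ (e a).val :=
        he.monotone (show (⟨0, ht⟩ : Fin t) ≤ a from by simp [Fin.le_def])
      have hm1 : (e ⟨a.val + 1, hat⟩).val ≤ (e b).val :=
        he.monotone (show (⟨a.val + 1, hat⟩ : Fin t) ≤ b from by
          simp only [Fin.le_def]; have := b.isLt; omega)
      have b1 := (e a).isLt
      have b2 := (e ⟨a.val + 1, hat⟩).isLt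
      have b3 := (e b).isLt
      have b4 := (e ⟨0, ht⟩).isLt
      have E1 := mod_two_n hn (show n - (e a).val + c.val < 2 * n by omega)
      have E2 := mod_two_n hn (show n - (e ⟨a.val + 1, hat⟩).val + c.val < 2 * n by omega)
      have E3 := mod_two_n hn (show n - (e b).val + c.val < 2 * n by omega)
      have E4 := mod_two_n hn (show n - (e ⟨0, ht⟩).val + c.val < 2 * n by omega)
      omega
    · apply Fin.ext
      have := a.isLt
      omega

/-- Every partial isometry of the cycle graph C_n (n ≥ 3), given by its
increasing domain enumeration e and injective images f, is oriented. -/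
theorem partial_isometry_oriented {n t : ℕ} (hn : 3 ≤ n)
    (e : Fin t → Fin n) (he : StrictMono e)
    (f : Fin t → Fin n) (hf : Function.Injective f)
    (hiso : ∀ x y : Fin t, cycleDist n (f x) (f y) = cycleDist n (e x) (e y)) :
    IsOrientedSeq f := by
  haveI : NeZero n := ⟨by omega⟩
  rcases Nat.lt_or_ge t 3 with ht | ht
  · -- t ≤ 2 : any sequence is cyclic
    left
    rw [IsCyclicSeq, Finset.card_le_one]
    intro a ha b hb
    simp only [Finset.mem_filter, Finset.mem_univ, true_and] at ha hb
    by_contra hne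
    have hne' : a.val ≠ b.val := fun h => hne (Fin.ext h)
    have hat := a.isLt
    have hbt := b.isLt
    have h2 : t = 2 := by omega
    subst h2
    have hab : (a.val + 1) % 2 = b.val := by omega
    have hba : (b.val + 1) % 2 = a.val := by omega
    have ia : (⟨(a.val + 1) % 2, Nat.mod_lt _ a.pos⟩ : Fin 2) = b := Fin.ext hab
    have ib : (⟨(b.val + 1) % 2, Nat.mod_lt _ b.pos⟩ : Fin 2) = a := Fin.ext hba
    rw [ia] at ha
    rw [ib] at hb
    exact absurd ha (not_lt.2 hb.le)
  · -- t ≥ 3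
    set x0 : Fin t := ⟨0, by omega⟩ with hx0def
    obtain ⟨y, hxy, h2d⟩ : ∃ y : Fin t, x0 ≠ y ∧ 2 * cycleDist n (e x0) (e y) ≠ n := by
      by_cases h1 : 2 * cycleDist n (e x0) (e ⟨1, by omega⟩) = n
      · refine ⟨⟨2, by omega⟩, by simp [Fin.ext_iff, hx0def], fun h2 => ?_⟩
        have heq := antipode_unique (e x0) _ _ h1 h2
        exact (he.injective.ne
          (show (⟨1, by omega⟩ : Fin t) ≠ ⟨2, by omega⟩ from by simp [Fin.ext_iff])) heq
      · exact ⟨⟨1, by omega⟩, by simp [Fin.ext_iff, hx0def], h1⟩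
    have hd0 : cycleDist n (e x0) (e y) ≠ 0 := fun h =>
      (he.injective.ne hxy) (cycleDist_eq_zero h)
    have hf0 : cycleDist n (f x0) (f y) ≠ 0 := by rw [hiso]; exact hd0
    have hf2 : 2 * cycleDist n (f x0) (f y) ≠ n := by rw [hiso]; exact h2d
    have hmin : min (f y - f x0).val (-(f y - f x0)).val
        = min (e y - e x0).val (-(e y - e x0)).val := by
      have h := hiso x0 y
      rw [cycleDist_eq', cycleDist_eq'] at h
      exact h
    rcases Dlem hmin with k | k
    · -- rotation case
      have hfeq : ∀ z, f z = e z + (f x0 - e x0) := by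
        intro z
        apply rigid (f x0) (f y) _ _ hf0 hf2
        · rw [hiso x0 z]
          calc cycleDist n (e x0) (e z)
              = cycleDist n (e x0 + (f x0 - e x0)) (e z + (f x0 - e x0)) :=
                (cycleDist_add _ _ _).symm
            _ = cycleDist n (f x0) (e z + (f x0 - e x0)) := by
                rw [show e x0 + (f x0 - e x0) = f x0 from by open Fin.CommRing in ring]
        · rw [hiso y z]
          calc cycleDist n (e y) (e z)
              = cycleDist n (e y + (f x0 - e x0)) (e z + (f x0 - e x0)) :=
                (cycleDist_add _ _ _).symm
            _ = cycleDist n (f y) (e z + (f x0 - e x0)) := by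
                rw [show e y + (f x0 - e x0) = f y from by open Fin.CommRing in linear_combination -k]
      have hfe : f = fun i => e i + (f x0 - e x0) := funext hfeq
      rw [hfe]
      exact Or.inl (rot_cyclic e he _)
    · -- reflection case
      have hfeq : ∀ z, f z = (f x0 + e x0) - e z := by
        intro z
        apply rigid (f x0) (f y) _ _ hf0 hf2
        · rw [hiso x0 z]
          calc cycleDist n (e x0) (e z)
              = cycleDist n ((f x0 + e x0) - e x0) ((f x0 + e x0) - e z) :=
                (cycleDist_sub _ _ _).symm
            _ = cycleDist n (f x0) ((f x0 + e x0) - e z) := by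
                rw [show (f x0 + e x0) - e x0 = f x0 from by open Fin.CommRing in ring]
        · rw [hiso y z]
          calc cycleDist n (e y) (e z)
              = cycleDist n ((f x0 + e x0) - e y) ((f x0 + e x0) - e z) :=
                (cycleDist_sub _ _ _).symm
            _ = cycleDist n (f y) ((f x0 + e x0) - e z) := by
                rw [show (f x0 + e x0) - e y = f y from by open Fin.CommRing in linear_combination -k]
      have hfe : f = fun i => (f x0 + e x0) - e i := funext hfeq
      rw [hfe]
      exact Or.inr (refl_anticyclic e he _)
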